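/- arXiv:1111.2465 — 4 statements merged into one kernel-verified Lean document; each statement's English description precedes it below -/
import Mathlib

section
/- Let {m_i} be an unbounded sequence of positive integers and k a positive integer. Then for each residue class j mod k, for Lebesgue-almost every θ ∈ [0,1], the congruence ⌊m_i θ⌋ ≡ j (mod k) holds for infinitely many i. -/
open MeasureTheory Set Filter Topology


set_option maxHeartbeats 1000000 in
lemma aux_bound (M k : ℕ) (hM : 0 < M) (hk : 0 < k) (j : ZMod k) (a b : ℝ) (hab : a ≤ b) :
    ENNReal.ofReal ((b-a)/k - 2/M) ≤
      volume ({θ : ℝ | ((⌊(M : ℝ) * θ⌋ : ZMod k) = j)} ∩ Set.Icc a b) := by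
  haveI : NeZero k := ⟨hk.ne'⟩
  have hM0 : (0:ℝ) < M := by exact_mod_cast hM
  have hk0 : (0:ℝ) < k := by exact_mod_cast hk
  have hk1 : (1:ℝ) ≤ k := by exact_mod_cast hk
  by_cases htriv : (M:ℝ) * (b - a) < 1
  · have h1 : (b-a)/k ≤ (b-a) := div_le_self (by linarith) hk1
    have h2 : b - a < 1/M := by rw [lt_div_iff₀ hM0]; linarith
    have h3 : (0:ℝ) < 1/M := by positivity
    have : (b-a)/k - 2/M ≤ 0 := by
      have : (2:ℝ)/M = 1/M + 1/M := by ring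
      linarith
    simp [ENNReal.ofReal_eq_zero.2 this]
  push_neg at htriv
  set v : ℕ := (j - ((⌈(M:ℝ)*a⌉ : ℤ) : ZMod k)).val with hv
  set n0 : ℤ := ⌈(M:ℝ)*a⌉ + (v : ℤ) with hn0
  set N : ℕ := ⌊((M:ℝ)*(b-a) - 1)/k⌋₊ with hN
  have hn0cast : ((n0 : ZMod k)) = j := by
    rw [hn0, Int.cast_add, Int.cast_natCast, hv,
      ZMod.natCast_rightInverse (j - ((⌈(M:ℝ)*a⌉ : ℤ) : ZMod k))]
    ring
  have hvr : (0:ℝ) ≤ (v:ℝ) := Nat.cast_nonneg v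
  have hvr2 : (v:ℝ) ≤ (k:ℝ) - 1 := by
    have h2 : v < k := ZMod.val_lt _
    have : (v:ℝ) + 1 ≤ (k:ℝ) := by exact_mod_cast h2
    linarith
  have hn0low : ((M:ℝ)*a) ≤ n0 := by
    have h := Int.le_ceil ((M:ℝ)*a)
    rw [hn0]; push_cast; linarith
  have hn0high : (n0:ℝ) ≤ (M:ℝ)*a + k := by
    have h1 := Int.ceil_lt_add_one ((M:ℝ)*a)
    rw [hn0]; push_cast; linarith
  have hargnn : (0:ℝ) ≤ ((M:ℝ)*(b-a) - 1)/k := div_nonneg (by linarith) hk0.le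
  have hNle : (N:ℝ)*k ≤ (M:ℝ)*(b-a) - 1 := by
    have h := Nat.floor_le hargnn
    rw [← hN] at h
    calc (N:ℝ)*k ≤ (((M:ℝ)*(b-a) - 1)/k)*k := by gcongr
      _ = (M:ℝ)*(b-a) - 1 := by field_simp
  have hNge : (M:ℝ)*(b-a) - 1 < ((N:ℝ)+1)*k := by
    have h := Nat.lt_floor_add_one (((M:ℝ)*(b-a) - 1)/k)
    rw [← hN] at h
    calc (M:ℝ)*(b-a) - 1 = (((M:ℝ)*(b-a) - 1)/k)*k := by field_simp
      _ < ((N:ℝ)+1)*k := by gcongr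
  set f : ℕ → Set ℝ := fun t => Ico (((n0 + t*k : ℤ) : ℝ)/M) (((n0 + t*k : ℤ) : ℝ)/M + 1/M) with hf
  have hsub : ∀ t, t < N → f t ⊆ {θ : ℝ | ((⌊(M : ℝ) * θ⌋ : ZMod k) = j)} ∩ Set.Icc a b := by
    intro t ht θ hθ
    obtain ⟨hθ1, hθ2⟩ := hθ
    set n : ℤ := n0 + t*k with hn
    have hcomm : (M:ℝ)*θ = θ*M := mul_comm _ _
    have hnle : (n:ℝ) ≤ (M:ℝ)*θ := by
      rw [div_le_iff₀ hM0] at hθ1; linarith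
    have hθ2' : θ < ((n:ℝ)+1)/M := by rw [add_div]; exact hθ2
    have hnlt : (M:ℝ)*θ < (n:ℝ) + 1 := by
      rw [lt_div_iff₀ hM0] at hθ2'; linarith
    have hfloor : ⌊(M:ℝ) * θ⌋ = n := by
      rw [Int.floor_eq_iff]; constructor
      · exact hnle
      · exact_mod_cast hnlt
    have htk : (t:ℝ)*k ≤ (N:ℝ)*k - k := by
      have h : (t:ℝ) + 1 ≤ N := by exact_mod_cast ht
      nlinarith
    have hnR : (n:ℝ) = (n0:ℝ) + (t:ℝ)*(k:ℝ) := by rw [hn]; push_cast; ring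
    refine ⟨?_, ?_, ?_⟩
    · show ((⌊(M:ℝ) * θ⌋ : ZMod k) = j)
      rw [hfloor, hn]
      push_cast
      simp [ZMod.natCast_self, hn0cast]
    · have h : a ≤ (n:ℝ)/M := by
        rw [le_div_iff₀ hM0]
        have h0 : (0:ℝ) ≤ (t:ℝ)*k := by positivity
        rw [hnR]; nlinarith
      linarith
    · have hb : (n:ℝ) + 1 ≤ (M:ℝ)*b := by rw [hnR]; nlinarith
      have h : ((n:ℝ))/M + 1/M ≤ b := by
        rw [← add_div, div_le_iff₀ hM0]; linarith
      linarith
  have key : ∀ s t : ℕ, s < t → Disjoint (f s) (f t) := by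
    intro s t h
    apply Set.disjoint_left.2
    intro θ hθs hθt
    have h1 : θ < ((n0 + s*k : ℤ) : ℝ)/M + 1/M := hθs.2
    have h2 : ((n0 + t*k : ℤ) : ℝ)/M ≤ θ := hθt.1
    have hst' : ((n0 + s*k : ℤ) : ℝ) + 1 ≤ ((n0 + t*k : ℤ) : ℝ) := by
      push_cast
      have hs1 : (s:ℝ) + 1 ≤ t := by exact_mod_cast h
      nlinarith
    have h3 : ((n0 + s*k : ℤ) : ℝ)/M + 1/M ≤ ((n0 + t*k : ℤ) : ℝ)/M := by
      rw [← add_div, div_le_div_iff₀ hM0 hM0]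
      nlinarith
    linarith
  have hdisj : (↑(Finset.range N) : Set ℕ).PairwiseDisjoint f := by
    intro s _ t _ hst
    rcases lt_or_gt_of_ne hst with h|h
    · exact key s t h
    · exact (key t s h).symm
  have hmeasf : ∀ t ∈ Finset.range N, MeasurableSet (f t) := fun t _ => measurableSet_Ico
  have hvol : ∀ t, volume (f t) = ENNReal.ofReal (1/M) := by
    intro t
    rw [hf]
    simp only [Real.volume_Ico]
    congr 1
    ring
  have hunion : volume (⋃ t ∈ Finset.range N, f t) = (N : ENNReal) * ENNReal.ofReal (1/M) := by
    rw [measure_biUnion_finset hdisj hmeasf,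
      Finset.sum_congr rfl (fun t _ => hvol t), Finset.sum_const, Finset.card_range, nsmul_eq_mul]
  have hmono : (⋃ t ∈ Finset.range N, f t) ⊆
      {θ : ℝ | ((⌊(M : ℝ) * θ⌋ : ZMod k) = j)} ∩ Set.Icc a b := by
    intro θ hθ
    simp only [Set.mem_iUnion, Finset.mem_range] at hθ
    obtain ⟨t, ht, hθ⟩ := hθ
    exact hsub t ht hθ
  have hfin : ENNReal.ofReal ((b-a)/k - 2/M) ≤ (N : ENNReal) * ENNReal.ofReal (1/M) := by
    have hreal : (b-a)/k - 2/M ≤ (N:ℝ)*(1/M) := by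
      have hNk : (M:ℝ)*(b-a) - 2*k ≤ (N:ℝ)*k := by nlinarith
      calc (b-a)/k - 2/M = ((M:ℝ)*(b-a) - 2*k)/((M:ℝ)*k) := by field_simp
        _ ≤ ((N:ℝ)*k)/((M:ℝ)*k) := by gcongr
        _ = (N:ℝ)*(1/M) := by field_simp
    calc ENNReal.ofReal ((b-a)/k - 2/M) ≤ ENNReal.ofReal ((N:ℝ)*(1/M)) :=
        ENNReal.ofReal_le_ofReal hreal
      _ = ENNReal.ofReal (N:ℝ) * ENNReal.ofReal (1/M) := ENNReal.ofReal_mul (by positivity)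
      _ = (N : ENNReal) * ENNReal.ofReal (1/M) := by rw [ENNReal.ofReal_natCast]
  calc ENNReal.ofReal ((b-a)/k - 2/M) ≤ (N : ENNReal) * ENNReal.ofReal (1/M) := hfin
    _ = volume (⋃ t ∈ Finset.range N, f t) := hunion.symm
    _ ≤ _ := measure_mono hmono

lemma aux_meas (M k : ℕ) (j : ZMod k) :
    MeasurableSet {θ : ℝ | ((⌊(M : ℝ) * θ⌋ : ZMod k) = j)} :=
  (Int.measurable_floor.comp (measurable_const.mul measurable_id))
    (by trivial : MeasurableSet {n : ℤ | (n : ZMod k) = j})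

lemma aux_E (m : ℕ → ℕ) (hm : ∀ i, 0 < m i) (hunb : ∀ C : ℕ, ∃ i, C < m i)
    (k : ℕ) (hk : 0 < k) (j : ZMod k) (a b : ℝ) (hab : a ≤ b) :
    ENNReal.ofReal ((b-a)/k) ≤
      volume ({θ : ℝ | {i : ℕ | ((⌊(m i : ℝ) * θ⌋ : ZMod k) = j)}.Infinite} ∩ Set.Icc a b) := by
  set A : ℕ → Set ℝ := fun i => {θ : ℝ | ((⌊(m i : ℝ) * θ⌋ : ZMod k) = j)} with hA
  obtain ⟨φ, hφ⟩ : ∃ φ : ℕ → ℕ, ∀ n, n < m (φ n) :=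
    ⟨fun n => (hunb n).choose, fun n => (hunb n).choose_spec⟩
  set U : ℕ → Set ℝ := fun n => ⋃ p, ⋃ (_ : n ≤ p), (A (φ p) ∩ Set.Icc a b) with hU
  have hUmeas : ∀ n, MeasurableSet (U n) :=
    fun n => MeasurableSet.iUnion fun p => MeasurableSet.iUnion fun _ =>
      (aux_meas (m (φ p)) k j).inter measurableSet_Icc
  have hUanti : Antitone U := by
    intro n n' hnn'
    apply Set.iUnion_mono fun p => ?_
    exact Set.iUnion_subset fun h => Set.subset_iUnion_of_subset (h.trans' hnn') subset_rfl
  have hUfin : volume (U 0) ≠ ⊤ := by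
    have : U 0 ⊆ Set.Icc a b := by
      apply Set.iUnion_subset fun p => Set.iUnion_subset fun _ => Set.inter_subset_right
    exact ((measure_mono this).trans_lt (by simp [measure_Icc_lt_top])).ne
  have hUlb : ∀ n, ENNReal.ofReal ((b-a)/k) ≤ volume (U n) := by
    intro n
    have hbd : ∀ p, n ≤ p → ENNReal.ofReal ((b-a)/k - 2/((p:ℝ)+1)) ≤ volume (U n) := by
      intro p hp
      have h1 : A (φ p) ∩ Set.Icc a b ⊆ U n := Set.subset_iUnion_of_subset p
        (Set.subset_iUnion_of_subset hp subset_rfl)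
      refine le_trans ?_ ((measure_mono h1).trans' (aux_bound (m (φ p)) k (hm _) hk j a b hab))
      apply ENNReal.ofReal_le_ofReal
      have h2 : (p:ℝ)+1 ≤ (m (φ p) : ℝ) := by exact_mod_cast hφ p
      have h3 : (0:ℝ) < (p:ℝ)+1 := by positivity
      have : 2/((m (φ p)):ℝ) ≤ 2/((p:ℝ)+1) := by
        apply div_le_div_of_nonneg_left (by norm_num) h3 h2
      linarith
    have htd : Tendsto (fun p : ℕ => ENNReal.ofReal ((b-a)/k - 2/((p:ℝ)+1))) atTop
        (𝓝 (ENNReal.ofReal ((b-a)/k))) := by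
      apply ENNReal.continuous_ofReal.continuousAt.tendsto.comp
      have h0 : Tendsto (fun p : ℕ => 2/((p:ℝ)+1)) atTop (𝓝 0) := by
        have := (tendsto_const_div_atTop_nhds_zero_nat (2:ℝ)).comp (tendsto_add_atTop_nat 1)
        convert this using 2 with p
        show (2:ℝ)/((p:ℝ)+1) = 2/((p+1 : ℕ):ℝ)
        push_cast
        ring
      have := tendsto_const_nhds (x := (b-a)/k) (f := atTop (α := ℕ)).sub h0
      simpa using this
    exact le_of_tendsto htd (eventually_atTop.2 ⟨n, hbd⟩)
  have hlim := tendsto_measure_iInter_atTop (μ := volume)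
    (fun n => (hUmeas n).nullMeasurableSet) hUanti ⟨0, hUfin⟩
  have hInt : ENNReal.ofReal ((b-a)/k) ≤ volume (⋂ n, U n) :=
    ge_of_tendsto hlim (Eventually.of_forall hUlb)
  refine hInt.trans (measure_mono ?_)
  intro θ hθ
  simp only [Set.mem_iInter, hU, Set.mem_iUnion] at hθ
  have hIcc : θ ∈ Set.Icc a b := by
    obtain ⟨p, _, _, h⟩ := hθ 0
    exact h
  refine ⟨?_, hIcc⟩
  show {i : ℕ | ((⌊(m i : ℝ) * θ⌋ : ZMod k) = j)}.Infinite
  by_contra hfin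
  rw [Set.not_infinite] at hfin
  obtain ⟨B, hB⟩ := hfin.bddAbove
  set C : ℕ := Finset.sup (Finset.range (B+1)) m with hC
  obtain ⟨p, hp, hpa⟩ := hθ (C+1)
  have hmem : φ p ∈ {i : ℕ | ((⌊(m i : ℝ) * θ⌋ : ZMod k) = j)} := hpa.1
  have hle : φ p ≤ B := hB hmem
  have : m (φ p) ≤ C := Finset.le_sup (Finset.mem_range.2 (by omega))
  have := hφ p
  omega

/-- For an unbounded sequence of positive integers `m i`, a positive integer `k`
and any residue class `j` mod `k`, for Lebesgue-almost every `θ ∈ [0,1]` the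
congruence `⌊m i * θ⌋ ≡ j (mod k)` holds for infinitely many `i`. -/
theorem stmt2 (m : ℕ → ℕ) (hm : ∀ i, 0 < m i) (hunb : ∀ C : ℕ, ∃ i, C < m i)
    (k : ℕ) (hk : 0 < k) (j : ZMod k) :
    ∀ᵐ θ ∂(MeasureTheory.volume.restrict (Set.Icc (0:ℝ) 1)),
      {i : ℕ | ((⌊(m i : ℝ) * θ⌋ : ZMod k) = j)}.Infinite := by
  have hk0 : (0:ℝ) < k := by exact_mod_cast hk
  set E : Set ℝ := {θ : ℝ | {i : ℕ | ((⌊(m i : ℝ) * θ⌋ : ZMod k) = j)}.Infinite} with hE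
  have hEeq : E = ⋂ n, ⋃ i, ⋃ (_ : n ≤ i), {θ : ℝ | ((⌊(m i : ℝ) * θ⌋ : ZMod k) = j)} := by
    ext θ
    simp only [hE, Set.mem_setOf_eq, Set.mem_iInter, Set.mem_iUnion]
    constructor
    · intro hinf n
      obtain ⟨i, hi, hlt⟩ := hinf.exists_gt n
      exact ⟨i, hlt.le, hi⟩
    · intro h
      by_contra hfin
      rw [Set.not_infinite] at hfin
      obtain ⟨B, hB⟩ := hfin.bddAbove
      obtain ⟨i, hi, hmem⟩ := h (B+1)
      have := hB hmem
      omega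
  have hEmeas : MeasurableSet E := by
    rw [hEeq]
    exact MeasurableSet.iInter fun n => MeasurableSet.iUnion fun i =>
      MeasurableSet.iUnion fun _ => aux_meas (m i) k j
  have hlower : ∀ (x r : ℝ), 0 < r →
      ENNReal.ofReal (2*r/k) ≤ volume (E ∩ Metric.closedBall x r) := by
    intro x r hr
    rw [Real.closedBall_eq_Icc]
    have h := aux_E m hm hunb k hk j (x - r) (x + r) (by linarith)
    have h2 : (x + r - (x - r))/k = 2*r/k := by ring_nf
    rw [h2] at h
    exact h
  have hfail : ∀ x : ℝ, ¬ Tendsto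
      (fun r => volume (Eᶜ ∩ Metric.closedBall x r) / volume (Metric.closedBall x r))
      (𝓝[>] (0:ℝ)) (𝓝 1) := by
    intro x hx
    have hub : ∀ᶠ r in 𝓝[>] (0:ℝ),
        volume (Eᶜ ∩ Metric.closedBall x r) / volume (Metric.closedBall x r)
          ≤ ENNReal.ofReal (1 - 1/k) := by
      filter_upwards [self_mem_nhdsWithin] with r hr
      have hr : (0:ℝ) < r := hr
      have hBvol : volume (Metric.closedBall x r) = ENNReal.ofReal (2*r) := by
        rw [Real.volume_closedBall]
      have hEB := hlower x r hr
      have hsplit : Eᶜ ∩ Metric.closedBall x r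
          = Metric.closedBall x r \ (E ∩ Metric.closedBall x r) := by
        ext θ
        simp only [Set.mem_inter_iff, Set.mem_compl_iff, Set.mem_diff]
        tauto
      have hfinB : volume (E ∩ Metric.closedBall x r) ≠ ⊤ := by
        refine ((measure_mono Set.inter_subset_right).trans_lt ?_).ne
        rw [hBvol]; exact ENNReal.ofReal_lt_top
      have hdiff : volume (Eᶜ ∩ Metric.closedBall x r)
          ≤ ENNReal.ofReal (2*r) - ENNReal.ofReal (2*r/k) := by
        rw [hsplit, measure_diff Set.inter_subset_right
          ((hEmeas.inter measurableSet_closedBall).nullMeasurableSet) hfinB, hBvol]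
        exact tsub_le_tsub_left hEB _
      have hsub : ENNReal.ofReal (2*r) - ENNReal.ofReal (2*r/k)
          = ENNReal.ofReal (1 - 1/k) * ENNReal.ofReal (2*r) := by
        rw [← ENNReal.ofReal_sub _ (by positivity), ← ENNReal.ofReal_mul (by
          have : (1:ℝ)/k ≤ 1 := by
            rw [div_le_one hk0]; exact_mod_cast hk
          linarith)]
        congr 1
        field_simp
      apply ENNReal.div_le_of_le_mul
      rw [hBvol, ← hsub]
      exact hdiff
    have h1 := le_of_tendsto hx hub
    have h2 : ENNReal.ofReal (1 - 1/k) < 1 := by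
      rw [ENNReal.ofReal_lt_one]
      have : (0:ℝ) < 1/k := by positivity
      linarith
    exact absurd h1 (not_le.2 h2)
  have hnull : volume Eᶜ = 0 := by
    have hae := Besicovitch.ae_tendsto_measure_inter_div volume Eᶜ
    rw [ae_iff] at hae
    have huniv : (volume.restrict Eᶜ) Set.univ = 0 := by
      refine le_antisymm ?_ zero_le
      rw [← hae]
      apply measure_mono
      intro x _
      exact hfail x
    rwa [Measure.restrict_apply_univ] at huniv
  have hae : ∀ᵐ θ ∂(volume : Measure ℝ), θ ∈ E := by
    rw [ae_iff]
    convert hnull using 2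
    rfl
  filter_upwards [ae_restrict_of_ae hae] with θ hθ
  exact hθ
end

section
/- Let {m_i} be a strictly increasing sequence of positive integers with m_{i+1}/m_i → ∞ (superlacunary), and fix an integer k ≥ 1. Then for each residue class j mod k and almost every θ ∈ [0,1], the sequence X_i(θ) = ⌊m_i θ⌋ mod k takes the value j infinitely often. -/
open MeasureTheory Set Filter Metric

/-- Key quantitative estimate: the set where `⌊M θ⌋ ≡ j (mod k)` has measure at least
`(b-a)/k - 2/M` inside any interval `Ico a b`. -/
lemma key_measure (M k : ℕ) (hM : 0 < M) (hk : 0 < k) (j : ZMod k) (a b : ℝ) :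
    ENNReal.ofReal ((b - a)/k - 2/M) ≤
      volume ({θ : ℝ | ((⌊(M:ℝ)*θ⌋ : ZMod k) = j)} ∩ Set.Ico a b) := by
  haveI : NeZero k := ⟨hk.ne'⟩
  rcases le_or_gt ((b - a)/k - 2/M) 0 with h | h
  · simp [ENNReal.ofReal_eq_zero.2 h]
  have hMR : (0:ℝ) < M := by exact_mod_cast hM
  have hkR : (0:ℝ) < k := by exact_mod_cast hk
  have hk1 : (1:ℝ) ≤ k := by exact_mod_cast hk
  have hkZ : (1:ℤ) ≤ k := by exact_mod_cast hk
  set j' : ℤ := (j.val : ℤ) with hj'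
  set q0 : ℤ := ⌈(a*M - j')/k⌉ with hq0def
  set q1 : ℤ := ⌊(b*M - j' - 1)/k⌋ with hq1def
  set f : ℤ → Set ℝ := fun q =>
    Set.Ico (((j' + k*q : ℤ) : ℝ)/M) (((j' + k*q + 1 : ℤ) : ℝ)/M) with hf
  -- each piece is contained in the target set
  have hsub : ∀ q ∈ Finset.Icc q0 q1,
      f q ⊆ {θ : ℝ | ((⌊(M:ℝ)*θ⌋ : ZMod k) = j)} ∩ Set.Ico a b := by
    intro q hq θ hθ
    simp only [Finset.mem_Icc] at hq
    obtain ⟨hθ1, hθ2⟩ := hθ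
    have hfloor : ⌊(M:ℝ)*θ⌋ = j' + k*q := by
      rw [Int.floor_eq_iff]
      constructor
      · rw [div_le_iff₀ hMR] at hθ1
        push_cast at hθ1 ⊢
        nlinarith
      · rw [lt_div_iff₀ hMR] at hθ2
        push_cast at hθ2 ⊢
        nlinarith
    constructor
    · show ((⌊(M:ℝ)*θ⌋ : ZMod k) = j)
      rw [hfloor, hj']
      push_cast
      simp [ZMod.natCast_self, ZMod.natCast_rightInverse j]
    · -- θ ∈ Ico a b
      have hq0le : (a*M - j')/k ≤ (q0 : ℝ) := Int.le_ceil _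
      have hq1ge : (q1 : ℝ) ≤ (b*M - j' - 1)/k := Int.floor_le _
      have hqlow : (q0 : ℝ) ≤ q := by exact_mod_cast hq.1
      have hqhigh : (q : ℝ) ≤ q1 := by exact_mod_cast hq.2
      rw [div_le_iff₀ hkR] at hq0le
      rw [le_div_iff₀ hkR] at hq1ge
      constructor
      · have h1 : a ≤ (((j' + k*q : ℤ) : ℝ))/M := by
          rw [le_div_iff₀ hMR]
          push_cast
          nlinarith
        exact le_trans h1 hθ1
      · have h2 : (((j' + k*q + 1 : ℤ) : ℝ))/M ≤ b := by
          rw [div_le_iff₀ hMR]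
          push_cast
          nlinarith
        exact lt_of_lt_of_le hθ2 h2
  -- the pieces are pairwise disjoint
  have hdisj : (Finset.Icc q0 q1 : Set ℤ).PairwiseDisjoint f := by
    have key : ∀ p q : ℤ, p < q → Disjoint (f p) (f q) := by
      intro p q hlt
      rw [hf]
      have hint : j' + k*p + 1 ≤ j' + k*q := by nlinarith [Int.add_one_le_iff.2 hlt]
      have hcast : ((j' + k*p + 1 : ℤ) : ℝ)/M ≤ ((j' + k*q : ℤ) : ℝ)/M := by
        have : ((j' + k*p + 1 : ℤ) : ℝ) ≤ ((j' + k*q : ℤ) : ℝ) := by exact_mod_cast hint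
        gcongr
      rw [Set.Ico_disjoint_Ico]
      exact le_trans (min_le_left _ _) (le_trans hcast (le_max_right _ _))
    intro p hp q hq hpq
    rcases hpq.lt_or_gt with hl | hl
    · exact key p q hl
    · exact (key q p hl).symm
  -- compute the measure of the union
  have hmeas : volume (⋃ q ∈ Finset.Icc q0 q1, f q)
      = (Finset.Icc q0 q1).card • ENNReal.ofReal (1/M) := by
    rw [measure_biUnion_finset hdisj (fun q _ => measurableSet_Ico)]
    rw [Finset.sum_congr rfl (fun q _ => ?_), Finset.sum_const]
    rw [hf]
    simp only [Real.volume_Ico]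
    congr 1
    push_cast
    ring
  have hcardle : ENNReal.ofReal ((b - a)/k - 2/M)
      ≤ (Finset.Icc q0 q1).card • ENNReal.ofReal (1/M) := by
    rw [nsmul_eq_mul, ← ENNReal.ofReal_natCast, ← ENNReal.ofReal_mul (by positivity)]
    apply ENNReal.ofReal_le_ofReal
    set C : ℝ := ((Finset.Icc q0 q1).card : ℝ) with hCdef
    have hC : ((q1 + 1 - q0 : ℤ) : ℝ) ≤ C := by
      rw [hCdef, Int.card_Icc]
      exact_mod_cast Int.self_le_toNat _
    have hA : (q0:ℝ) < (a*M - j')/k + 1 := Int.ceil_lt_add_one _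
    have hB : (b*M - j' - 1)/k - 1 < (q1:ℝ) := Int.sub_one_lt_floor _
    have hdiff : (b*M-j'-1)/k - ((a*M-j')/k) = ((b-a)*M - 1)/k := by ring
    have h1 : ((b-a)*M - 1)/k - 1 ≤ C := by
      push_cast at hC
      linarith
    have e1 : (((b-a)*M - 1)/k)*k = (b-a)*M - 1 := div_mul_cancel₀ _ hkR.ne'
    have h2 : (b-a)*M - 1 - k ≤ C*k := by
      nlinarith [mul_le_mul_of_nonneg_right h1 hkR.le]
    have h3 : (b-a)*M - 2*k ≤ C*k := by linarith
    rw [mul_one_div, div_sub_div _ _ hkR.ne' hMR.ne', div_le_div_iff₀ (mul_pos hkR hMR) hMR]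
    nlinarith [mul_le_mul_of_nonneg_right h3 hMR.le]
  calc ENNReal.ofReal ((b - a)/k - 2/M)
      ≤ volume (⋃ q ∈ Finset.Icc q0 q1, f q) := by rw [hmeas]; exact hcardle
    _ ≤ _ := measure_mono (Set.iUnion₂_subset hsub)

lemma null_tail (m : ℕ → ℕ) (hm : ∀ i, 0 < m i) (hmono : StrictMono m)
    (k : ℕ) (hk : 0 < k) (j : ZMod k) (N : ℕ) :
    volume {θ : ℝ | ∀ i, N ≤ i → ¬((⌊(m i : ℝ)*θ⌋ : ZMod k) = j)} = 0 := by
  set E : ℕ → Set ℝ := fun i => {θ : ℝ | ((⌊(m i : ℝ)*θ⌋ : ZMod k) = j)} with hE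
  have hEmeas : ∀ i, MeasurableSet (E i) := by
    intro i
    have : E i = (fun θ : ℝ => ⌊(m i : ℝ)*θ⌋) ⁻¹' {n : ℤ | ((n : ZMod k) = j)} := rfl
    rw [this]
    exact ((measurable_const_mul _).floor) (Set.Countable.measurableSet (Set.to_countable _))
  set A : Set ℝ := {θ : ℝ | ∀ i, N ≤ i → ¬((⌊(m i : ℝ)*θ⌋ : ZMod k) = j)} with hA
  have hAmeas : MeasurableSet A := by
    have : A = ⋂ i, ⋂ (_ : N ≤ i), (E i)ᶜ := by
      ext θ; simp [hA, hE]
    rw [this]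
    exact MeasurableSet.iInter fun i => MeasurableSet.iInter fun _ => (hEmeas i).compl
  by_contra h
  have hne : (volume.restrict A) ≠ 0 := by
    exact fun h0 => h (Measure.restrict_eq_zero.1 h0)
  haveI : (MeasureTheory.ae (volume.restrict A)).NeBot := ae_neBot.2 hne
  have hd := Besicovitch.ae_tendsto_measure_inter_div (volume : Measure ℝ) A
  obtain ⟨x, hx⟩ := hd.exists
  have hkR : (0:ℝ) < k := by exact_mod_cast hk
  have hk1 : (1:ℝ) ≤ k := by exact_mod_cast hk
  have h12 : 1/(2*(k:ℝ)) ≤ 1/2 := one_div_le_one_div_of_le (by norm_num) (by linarith)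
  set c : ENNReal := ENNReal.ofReal (1 - 1/(2*k)) with hc
  have hclt : c < 1 := by
    rw [hc]
    apply ENNReal.ofReal_lt_one.2
    have : 0 < 1/(2*(k:ℝ)) := by positivity
    linarith
  have hev : ∀ᶠ r in nhdsWithin (0:ℝ) (Set.Ioi 0),
      c < volume (A ∩ closedBall x r) / volume (closedBall x r) := hx (Ioi_mem_nhds hclt)
  obtain ⟨r, hr, hr0⟩ := (hev.and eventually_mem_nhdsWithin).exists
  rw [Set.mem_Ioi] at hr0
  -- choose i large
  have hmtop : Tendsto (fun i => (m i : ℝ)) atTop atTop :=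
    tendsto_natCast_atTop_atTop.comp hmono.tendsto_atTop
  obtain ⟨i, hik, hiN⟩ := ((hmtop.eventually_gt_atTop (4*k/r)).and (eventually_ge_atTop N)).exists
  have hmR : (0:ℝ) < m i := by exact_mod_cast hm i
  -- the quantitative bounds
  have hs : 0 < 2*r/k - 2/(m i) := by
    rw [div_lt_iff₀ hr0] at hik
    rw [sub_pos, div_lt_div_iff₀ hmR hkR]
    nlinarith
  have hEI : ENNReal.ofReal (2*r/k - 2/(m i)) ≤ volume (closedBall x r ∩ E i) := by
    calc ENNReal.ofReal (2*r/k - 2/(m i))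
        = ENNReal.ofReal (((x+r) - (x-r))/k - 2/(m i)) := by ring_nf
      _ ≤ volume (E i ∩ Set.Ico (x-r) (x+r)) := key_measure (m i) k (hm i) hk j _ _
      _ ≤ volume (closedBall x r ∩ E i) := by
          apply measure_mono
          intro θ ⟨h1, h2⟩
          refine ⟨?_, h1⟩
          rw [Real.closedBall_eq_Icc]
          exact ⟨h2.1, h2.2.le⟩
  have hsub2 : A ∩ closedBall x r ⊆ closedBall x r \ (closedBall x r ∩ E i) := by
    intro θ ⟨h1, h2⟩
    refine ⟨h2, fun hmem => h1 i hiN hmem.2⟩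
  have hfin : volume (closedBall x r ∩ E i) ≠ ⊤ :=
    ne_top_of_le_ne_top (by rw [Real.volume_closedBall]; exact ENNReal.ofReal_ne_top) (measure_mono Set.inter_subset_left)
  have hdiff : volume (closedBall x r \ (closedBall x r ∩ E i))
      = volume (closedBall x r) - volume (closedBall x r ∩ E i) :=
    measure_diff Set.inter_subset_left ((measurableSet_closedBall.inter (hEmeas i)).nullMeasurableSet) hfin
  -- contradiction
  have hmul : c * volume (closedBall x r) ≤ volume (A ∩ closedBall x r) :=
    ENNReal.mul_le_of_le_div hr.le
  have hub : volume (A ∩ closedBall x r)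
      ≤ volume (closedBall x r) - ENNReal.ofReal (2*r/k - 2/(m i)) := by
    refine le_trans (measure_mono hsub2) ?_
    rw [hdiff]
    exact tsub_le_tsub_left hEI _
  rw [Real.volume_closedBall] at hmul hub
  have hcomb : ENNReal.ofReal ((1 - 1/(2*k)) * (2*r))
      ≤ ENNReal.ofReal ((2*r) - (2*r/k - 2/(m i))) := by
    calc ENNReal.ofReal ((1 - 1/(2*k)) * (2*r))
        = c * ENNReal.ofReal (2*r) := by
          rw [hc, ENNReal.ofReal_mul]
          have : 0 < 1/(2*(k:ℝ)) := by positivity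
          linarith
      _ ≤ ENNReal.ofReal (2*r) - ENNReal.ofReal (2*r/k - 2/(m i)) := le_trans hmul hub
      _ = ENNReal.ofReal ((2*r) - (2*r/k - 2/(m i))) := (ENNReal.ofReal_sub _ hs.le).symm
  have h2rk : 2*r/(k:ℝ) ≤ 2*r := div_le_self (by linarith) hk1
  have h2mpos : (0:ℝ) < 2/(m i) := by positivity
  rw [ENNReal.ofReal_le_ofReal_iff (by linarith)] at hcomb
  -- final real contradiction
  rw [div_lt_iff₀ hr0] at hik
  have h2m : 2/(m i : ℝ) < r/(2*k) := by
    rw [div_lt_div_iff₀ hmR (by positivity)]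
    nlinarith
  have hexp : (1 - 1/(2*(k:ℝ))) * (2*r) = 2*r - r/k := by
    field_simp
  rw [hexp] at hcomb
  have : r/k < r/k := by
    calc r/k ≤ 2/(m i : ℝ) := by
          have hsplit : 2*r/(k:ℝ) = 2*(r/k) := by ring
          linarith
      _ < r/(2*k) := h2m
      _ ≤ r/k := by
          apply div_le_div_of_nonneg_left hr0.le hkR
          linarith
  exact lt_irrefl _ this

/-- For a strictly increasing superlacunary sequence of positive integers
(`m_{i+1}/m_i → ∞`), a positive integer `k` and a residue class `j` mod `k`,
for Lebesgue-almost every `θ ∈ [0,1]` the sequence `X_i(θ) = ⌊m_i θ⌋ mod k`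
takes the value `j` infinitely often. -/
theorem stmt3 (m : ℕ → ℕ) (hm : ∀ i, 0 < m i) (hmono : StrictMono m)
    (hsuper : Filter.Tendsto (fun i => (m (i+1) : ℝ) / (m i : ℝ)) Filter.atTop Filter.atTop)
    (k : ℕ) (hk : 0 < k) (j : ZMod k) :
    ∀ᵐ θ ∂(MeasureTheory.volume.restrict (Set.Icc (0:ℝ) 1)),
      {i : ℕ | ((⌊(m i : ℝ) * θ⌋ : ZMod k) = j)}.Infinite := by
  have hae : ∀ᵐ θ ∂(volume : Measure ℝ),
      {i : ℕ | ((⌊(m i : ℝ) * θ⌋ : ZMod k) = j)}.Infinite := by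
    rw [MeasureTheory.ae_iff]
    refine measure_mono_null (t := ⋃ N : ℕ,
      {θ : ℝ | ∀ i, N ≤ i → ¬((⌊(m i : ℝ)*θ⌋ : ZMod k) = j)}) ?_ ?_
    · intro θ hθ
      simp only [Set.mem_setOf_eq] at hθ
      rw [Set.not_infinite] at hθ
      obtain ⟨N, hN⟩ := hθ.bddAbove
      refine Set.mem_iUnion.2 ⟨N+1, fun i hi hPi => ?_⟩
      have : i ≤ N := hN hPi
      omega
    · exact measure_iUnion_null fun N => null_tail m hm hmono k hk j N
  exact hae.filter_mono (MeasureTheory.ae_mono Measure.restrict_le_self)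
end

section
/- Let A_n be constructed by removing, from X = S^1 × ℤ/kℤ, the sets ∪_{i=0}^{kq_n - 1} ∪_{j=1}^{N} ([d_j - k‖q_n α‖ - iα, d_j - iα) × ℤ/kℤ). Then the symmetric difference satisfies μ(A_n △ T(A_n)) ≤ 2 k² N ‖q_n α‖, where T(x,ℓ) = (x + α mod 1, ℓ + I(x) mod k). -/
open MeasureTheory
open scoped ENNReal

lemma fract_add_left' (a b : ℝ) : Int.fract (Int.fract a + b) = Int.fract (a + b) := by
  have h : Int.fract a + b = (a + b) - (⌊a⌋ : ℤ) := by rw [Int.fract]; ring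
  rw [h, Int.fract_sub_intCast]

lemma fract_strip (c t : ℝ) :
    volume {x ∈ Set.Ico (0:ℝ) 1 | Int.fract (x + c) < t} ≤ ENNReal.ofReal t := by
  set f := Int.fract c with hf
  have hf0 : 0 ≤ f := Int.fract_nonneg c
  have hf1 : f < 1 := Int.fract_lt_one c
  have hsub : {x ∈ Set.Ico (0:ℝ) 1 | Int.fract (x + c) < t} ⊆
      Set.Ico 0 (t - f) ∪ Set.Ico (1 - f) (1 - f + min t f) := by
    rintro x ⟨⟨hx0, hx1⟩, hx⟩
    have key : Int.fract (x + c) = Int.fract (x + f) := by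
      rw [add_comm x c, add_comm x f, ← fract_add_left' c x, hf]
    rw [key] at hx
    rcases lt_or_ge (x + f) 1 with h | h
    · left
      have : Int.fract (x + f) = x + f := Int.fract_eq_self.mpr ⟨by linarith, h⟩
      rw [this] at hx
      exact ⟨hx0, by linarith⟩
    · right
      have : Int.fract (x + f) = x + f - 1 := by
        have h2 : Int.fract (x + f - 1) = x + f - 1 :=
          Int.fract_eq_self.mpr ⟨by linarith, by linarith⟩
        rw [← h2, show x + f - 1 = x + f - (1:ℤ) by push_cast; ring, Int.fract_sub_intCast]
      rw [this] at hx
      refine ⟨by linarith, ?_⟩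
      rcases le_total t f with h' | h'
      · rw [min_eq_left h']; linarith
      · rw [min_eq_right h']; linarith
  calc volume {x ∈ Set.Ico (0:ℝ) 1 | Int.fract (x + c) < t}
      ≤ volume (Set.Ico 0 (t - f)) + volume (Set.Ico (1 - f) (1 - f + min t f)) :=
        (measure_mono hsub).trans (measure_union_le _ _)
    _ = ENNReal.ofReal (t - f) + ENNReal.ofReal (min t f) := by
        rw [Real.volume_Ico, Real.volume_Ico]; ring_nf
    _ ≤ ENNReal.ofReal t := by
        rcases le_total t f with h' | h'
        · rw [min_eq_left h', ENNReal.ofReal_eq_zero.mpr (by linarith)]; simp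
        · rw [min_eq_right h', ← ENNReal.ofReal_add (by linarith) hf0]
          simp

/-- The set `A_n ⊆ S¹ × ℤ/kℤ` (the circle modelled as `[0,1)` via `Int.fract`),
obtained by removing the `k q_n` backward rotation-translates of `N` intervals of
length `k‖q_n α‖`, is nearly invariant under the skew product
`T(x,ℓ) = (x + α mod 1, ℓ + I(x))`:
`μ(A_n △ T(A_n)) ≤ 2 k² N ‖q_n α‖`, where `μ` is the product of Lebesgue measure
and counting measure. -/
theorem stmt16 (k : ℕ) (hk : 0 < k) (α : ℝ) (hα : Irrational α)
    (β c : ℝ) (hβ : β ∈ Set.Ioo (0:ℝ) 1)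
    (q : ℕ) (hq : 0 < q) (N : ℕ) (d : Fin N → ℝ)
    (δ : ℝ) (hδ : δ = |(q : ℝ) * α - round ((q : ℝ) * α)|)
    (I : ℝ → ZMod k) (hI : ∀ x, I x = if Int.fract (x - c) < β then 1 else 0)
    (T : ℝ × ZMod k → ℝ × ZMod k)
    (hT : ∀ z, T z = (Int.fract (z.1 + α), z.2 + I z.1))
    (A : Set (ℝ × ZMod k))
    (hA : A = {x ∈ Set.Ico (0:ℝ) 1 |
        ∀ i < k * q, ∀ j : Fin N,
          ¬ Int.fract (x + (i : ℝ) * α - (d j - (k : ℝ) * δ)) < (k : ℝ) * δ}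
      ×ˢ (Set.univ : Set (ZMod k))) :
    (volume.prod Measure.count) (symmDiff A (T '' A))
      ≤ ENNReal.ofReal (2 * (k : ℝ)^2 * N * δ) := by
  haveI : NeZero k := ⟨hk.ne'⟩
  have hδ0 : 0 ≤ δ := hδ ▸ abs_nonneg _
  set S : Set ℝ := {x ∈ Set.Ico (0:ℝ) 1 | ∀ i < k * q, ∀ j : Fin N,
      ¬ Int.fract (x + (i : ℝ) * α - (d j - (k : ℝ) * δ)) < (k : ℝ) * δ} with hS
  set S' : Set ℝ := {x ∈ Set.Ico (0:ℝ) 1 | ∀ i < k * q, ∀ j : Fin N,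
      ¬ Int.fract (x + ((i : ℝ) - 1) * α - (d j - (k : ℝ) * δ)) < (k : ℝ) * δ} with hS'
  -- Step 1: T '' A = S' ×ˢ univ
  have himg : T '' A = S' ×ˢ (Set.univ : Set (ZMod k)) := by
    rw [hA]
    ext ⟨y, ℓ⟩
    simp only [Set.mem_image, Set.mem_prod, Set.mem_univ, and_true, Set.mem_setOf_eq,
      hS', Prod.exists]
    constructor
    · rintro ⟨x, m, ⟨hx01, hxS⟩, hTx⟩
      rw [hT, Prod.mk.injEq] at hTx
      obtain ⟨hy, -⟩ := hTx
      subst hy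
      refine ⟨⟨Int.fract_nonneg _, Int.fract_lt_one _⟩, ?_⟩
      intro i hi j
      have e1 : Int.fract (x + α) + ((i : ℝ) - 1) * α - (d j - (k:ℝ)*δ)
          = Int.fract (x + α) + (((i : ℝ) - 1) * α - (d j - (k:ℝ)*δ)) := by ring
      rw [e1, fract_add_left',
        show x + α + (((i : ℝ) - 1) * α - (d j - (k:ℝ)*δ))
          = x + (i : ℝ) * α - (d j - (k:ℝ)*δ) by ring]
      exact hxS i hi j
    · rintro ⟨hy01, hyS⟩
      refine ⟨Int.fract (y - α), ℓ - I (Int.fract (y - α)), ⟨Set.mem_Ico.mpr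
        ⟨Int.fract_nonneg _, Int.fract_lt_one _⟩, ?_⟩, ?_⟩
      · intro i hi j
        have e1 : Int.fract (y - α) + (i : ℝ) * α - (d j - (k:ℝ)*δ)
            = Int.fract (y - α) + ((i : ℝ) * α - (d j - (k:ℝ)*δ)) := by ring
        rw [e1, fract_add_left',
          show y - α + ((i : ℝ) * α - (d j - (k:ℝ)*δ))
            = y + ((i : ℝ) - 1) * α - (d j - (k:ℝ)*δ) by ring]
        exact hyS i hi j
      · rw [hT, Prod.mk.injEq]
        constructor
        · simp only
          rw [fract_add_left', show y - α + α = y by ring, Int.fract_eq_self.mpr hy01]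
        · simp
  -- Step 2: symmDiff is a product
  have hsd : symmDiff A (T '' A) = (symmDiff S S') ×ˢ (Set.univ : Set (ZMod k)) := by
    rw [himg, hA]
    ext ⟨x, ℓ⟩
    simp only [Set.mem_symmDiff, Set.mem_prod, Set.mem_univ, and_true]
  -- Step 3: the symmDiff of S and S' is inside two unions of strips
  set E₁ : Fin N → Set ℝ := fun j =>
    {x ∈ Set.Ico (0:ℝ) 1 | Int.fract (x + (-α - (d j - (k:ℝ)*δ))) < (k:ℝ)*δ} with hE₁
  set E₂ : Fin N → Set ℝ := fun j =>
    {x ∈ Set.Ico (0:ℝ) 1 |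
      Int.fract (x + (((k*q-1 : ℕ) : ℝ) * α - (d j - (k:ℝ)*δ))) < (k:ℝ)*δ} with hE₂
  have hkq : 0 < k * q := Nat.mul_pos hk hq
  have hsub : symmDiff S S' ⊆ (⋃ j, E₁ j) ∪ (⋃ j, E₂ j) := by
    intro x hx
    rw [Set.mem_symmDiff] at hx
    rcases hx with ⟨hxS, hxS'⟩ | ⟨hxS', hxS⟩
    · left
      obtain ⟨hx01, hcond⟩ := hxS
      rw [hS', Set.mem_setOf_eq] at hxS'
      push_neg at hxS'
      obtain ⟨i, hi, j, hij⟩ := hxS' hx01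
      rcases Nat.eq_zero_or_pos i with h0 | h0
      · subst h0
        simp only [Set.mem_iUnion, hE₁]
        refine ⟨j, hx01, ?_⟩
        rw [show x + (-α - (d j - (k:ℝ)*δ)) = x + (((0:ℕ):ℝ) - 1) * α - (d j - (k:ℝ)*δ)
          by push_cast; ring]
        exact hij
      · exfalso
        apply hcond (i - 1) (by omega) j
        rw [show ((i - 1 : ℕ) : ℝ) = (i : ℝ) - 1 by
          rw [Nat.cast_sub h0]; norm_num]
        exact hij
    · right
      obtain ⟨hx01, hcond⟩ := hxS'
      rw [hS, Set.mem_setOf_eq] at hxS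
      push_neg at hxS
      obtain ⟨i, hi, j, hij⟩ := hxS hx01
      rcases Nat.lt_or_ge (i + 1) (k * q) with h0 | h0
      · exfalso
        apply hcond (i + 1) h0 j
        rw [show ((i + 1 : ℕ) : ℝ) - 1 = (i : ℝ) by push_cast; ring]
        exact hij
      · have hie : i = k * q - 1 := by omega
        subst hie
        simp only [Set.mem_iUnion, hE₂]
        refine ⟨j, hx01, ?_⟩
        rw [show x + (((k*q-1 : ℕ) : ℝ) * α - (d j - (k:ℝ)*δ))
          = x + ((k*q-1 : ℕ) : ℝ) * α - (d j - (k:ℝ)*δ) by ring]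
        exact hij
  -- Step 4: measure bound for S △ S'
  have hstrip : ∀ (cc : ℝ),
      volume {x ∈ Set.Ico (0:ℝ) 1 | Int.fract (x + cc) < (k:ℝ)*δ}
        ≤ ENNReal.ofReal ((k:ℝ)*δ) := fun cc => fract_strip cc _
  have hU : ∀ (E : Fin N → Set ℝ),
      (∀ j, volume (E j) ≤ ENNReal.ofReal ((k:ℝ)*δ)) →
      volume (⋃ j, E j) ≤ (N : ℝ≥0∞) * ENNReal.ofReal ((k:ℝ)*δ) := by
    intro E hE
    refine (measure_iUnion_le _).trans ?_
    rw [tsum_fintype]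
    calc ∑ j, volume (E j) ≤ ∑ _j : Fin N, ENNReal.ofReal ((k:ℝ)*δ) :=
          Finset.sum_le_sum fun j _ => hE j
      _ = (N : ℝ≥0∞) * ENNReal.ofReal ((k:ℝ)*δ) := by
          simp [Finset.sum_const, nsmul_eq_mul]
  have hSS' : volume (symmDiff S S') ≤ 2 * (N : ℝ≥0∞) * ENNReal.ofReal ((k:ℝ)*δ) := by
    calc volume (symmDiff S S') ≤ volume (⋃ j, E₁ j) + volume (⋃ j, E₂ j) :=
          (measure_mono hsub).trans (measure_union_le _ _)
      _ ≤ (N : ℝ≥0∞) * ENNReal.ofReal ((k:ℝ)*δ) + (N : ℝ≥0∞) * ENNReal.ofReal ((k:ℝ)*δ) :=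
          add_le_add (hU E₁ fun j => hstrip _) (hU E₂ fun j => hstrip _)
      _ = 2 * (N : ℝ≥0∞) * ENNReal.ofReal ((k:ℝ)*δ) := by ring
  -- Step 5: conclude
  rw [hsd, Measure.prod_prod, Measure.count_univ, ENat.card_eq_coe_fintype_card, ZMod.card,
    ENat.toENNReal_coe]
  calc volume (symmDiff S S') * (k : ℝ≥0∞)
      ≤ (2 * (N : ℝ≥0∞) * ENNReal.ofReal ((k:ℝ)*δ)) * (k : ℝ≥0∞) :=
        mul_le_mul_left hSS' _
    _ = ENNReal.ofReal (2 * (k : ℝ)^2 * N * δ) := by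
        rw [ENNReal.ofReal_mul (by positivity : (0:ℝ) ≤ (k:ℝ)),
          ← ENNReal.ofReal_natCast k, ← ENNReal.ofReal_natCast N,
          show ((2:ℝ≥0∞)) = ENNReal.ofReal 2 by simp]
        rw [← ENNReal.ofReal_mul (by norm_num), ← ENNReal.ofReal_mul (by positivity),
          ← ENNReal.ofReal_mul (by positivity), ← ENNReal.ofReal_mul (by positivity)]
        congr 1
        ring
end

section
/- Let α be irrational with convergents p_n/q_n, let 0 < β < 1, fix a positive integer k, and suppose x ∈ S^1 is such that for all 0 ≤ i < k q_n, the points x + iα and x + i p_n/q_n (mod 1) lie in the same piece of the partition {[0,β), [β,1)}. Then for each 0 ≤ m < k, Σ_{i=m q_n}^{(m+1)q_n - 1} 1_{[0,β)}(x + iα mod 1) = Σ_{i=0}^{q_n - 1} 1_{[0,β)}(x + i p_n/q_n mod 1), i.e., each consecutive block of q_n rotation orbit points visits [0, β) the same number of times. -/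
/-- If through time `k q_n` the irrational orbit `x + iα` and the rational orbit
`x + i p_n/q_n` (mod 1) always lie in the same piece of the partition
`{[0,β), [β,1)}`, then each consecutive block of `q_n` irrational orbit points
visits `[0,β)` the same number of times as one full rational period. -/
theorem stmt17 (α : ℝ) (hα : Irrational α) (β : ℝ) (hβ : β ∈ Set.Ioo (0:ℝ) 1)
    (k : ℕ) (hk : 0 < k) (p : ℤ) (q : ℕ) (hq : 0 < q) (x : ℝ)
    (hgood : ∀ i < k * q,
      (Int.fract (x + (i : ℝ) * α) < β ↔ Int.fract (x + (i : ℝ) * ((p : ℝ) / q)) < β)) :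
    ∀ m < k,
      (∑ i ∈ Finset.Ico (m * q) ((m + 1) * q),
          if Int.fract (x + (i : ℝ) * α) < β then (1 : ℕ) else 0)
        = ∑ i ∈ Finset.range q,
            if Int.fract (x + (i : ℝ) * ((p : ℝ) / q)) < β then (1 : ℕ) else 0 := by
  intro m hm
  have hshift : Finset.Ico (m * q) ((m + 1) * q) = (Finset.range q).map
      ⟨fun j => m * q + j, add_right_injective (m * q)⟩ := by
    ext i
    simp [Finset.mem_map, Finset.mem_Ico, Finset.mem_range]
    have : (m + 1) * q = m * q + q := by ring
    rw [this]
    constructor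
    · rintro ⟨h1, h2⟩; exact ⟨i - m * q, by omega, by omega⟩
    · rintro ⟨j, hj, rfl⟩; omega
  rw [hshift, Finset.sum_map]
  apply Finset.sum_congr rfl
  intro j hj
  simp only [Finset.mem_range] at hj
  have hi : m * q + j < k * q := by
    calc m * q + j < m * q + q := by omega
    _ = (m + 1) * q := by ring
    _ ≤ k * q := Nat.mul_le_mul_right q (by omega)
  have h1 := hgood (m * q + j) hi
  have hfract : Int.fract (x + ((m * q + j : ℕ) : ℝ) * ((p : ℝ) / q))
      = Int.fract (x + (j : ℝ) * ((p : ℝ) / q)) := by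
    rw [Int.fract_eq_fract]
    refine ⟨m * p, ?_⟩
    have hq0 : (q : ℝ) ≠ 0 := Nat.cast_ne_zero.mpr hq.ne'
    push_cast
    field_simp
    ring
  rw [hfract] at h1
  simp only [Function.Embedding.coeFn_mk, h1]
end
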